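/- Suppose ℓ(k, w) ≠ ℓ(j, w) for all j ≠ k and all w ∈ S, and define the pairwise IV estimand β(j, k, w) = (μ(k, w) − μ(j, w))/(ℓ(k, w) − ℓ(j, w)) and the weight ω(j, k, w) = p_j(w)·p_k(w)·(ℓ(k, w) − ℓ(j, w))². If E[ℓ̈·X] ≠ 0, then the leniency IV estimand β* = E[ℓ̈·Y]/E[ℓ̈·X] equals the weighted average of pairwise IV estimands: β* = (Σ_{1≤j<k≤K} E[ω(j, k, W)·β(j, k, W)]) / (Σ_{1≤j<k≤K} E[ω(j, k, W)]). -/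

import Mathlib

open MeasureTheory ProbabilityTheory BigOperators


section Aux

lemma half_sum {K : ℕ} (F : Fin K → Fin K → ℝ) (hsymm : ∀ j k, F j k = F k j)
    (hdiag : ∀ j, F j j = 0) :
    ∑ j, ∑ k, (if j < k then F j k else 0) = (∑ j, ∑ k, F j k) / 2 := by
  have h1 : ∑ j, ∑ k, F j k
      = ∑ j, ∑ k, ((if j < k then F j k else 0) + (if k < j then F j k else 0)) := by
    refine Finset.sum_congr rfl fun j _ => Finset.sum_congr rfl fun k _ => ?_
    rcases lt_trichotomy j k with h | h | h
    · simp [h, not_lt.mpr h.le]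
    · simp [h, hdiag]
    · simp [h, not_lt.mpr h.le]
  have h2 : ∑ j, ∑ k, (if k < j then F j k else 0)
      = ∑ j, ∑ k, (if j < k then F j k else 0) := by
    rw [Finset.sum_comm]
    exact Finset.sum_congr rfl fun j _ => Finset.sum_congr rfl fun k _ => by
      by_cases h : j < k <;> simp [h, hsymm]
  rw [h1]
  simp only [Finset.sum_add_distrib, h2]
  ring

lemma cov_id {K : ℕ} (p l m : Fin K → ℝ) (hp : ∑ k, p k = 1) :
    ∑ j, ∑ k, p j * p k * (l k - l j) * (m k - m j)
      = 2 * ∑ k, p k * (l k - ∑ j, p j * l j) * m k := by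
  have expand : ∀ j k : Fin K, p j * p k * (l k - l j) * (m k - m j)
      = p j * (p k * l k * m k) - (p j * m j) * (p k * l k)
        - (p j * l j) * (p k * m k) + (p j * l j * m j) * p k := by
    intro j k; ring
  simp only [expand, Finset.sum_add_distrib, Finset.sum_sub_distrib,
    ← Finset.mul_sum, ← Finset.sum_mul]
  have e2 : ∀ k : Fin K, p k * (l k - ∑ j, p j * l j) * m k
      = p k * l k * m k - (∑ j, p j * l j) * (p k * m k) := by intro k; ring
  rw [show (∑ k, p k * (l k - ∑ j, p j * l j) * m k)
      = ∑ k, (p k * l k * m k - (∑ j, p j * l j) * (p k * m k)) from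
    Finset.sum_congr rfl fun k _ => e2 k]
  rw [Finset.sum_sub_distrib, ← Finset.mul_sum, hp]
  ring

variable {Ω : Type*} [MeasurableSpace Ω] (μ : Measure Ω) [IsProbabilityMeasure μ]
  {K : ℕ} {S : Type*} [Fintype S] [MeasurableSpace S] [MeasurableSingletonClass S]
  {κ : Ω → Fin K} {Wc : Ω → S}

lemma meas_cell (hκ : Measurable κ) (hWc : Measurable Wc) (k : Fin K) (w : S) :
    MeasurableSet {ω | κ ω = k ∧ Wc ω = w} := by
  have : {ω | κ ω = k ∧ Wc ω = w} = κ ⁻¹' {k} ∩ Wc ⁻¹' {w} := by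
    ext ω; simp [Set.mem_setOf_eq]
  rw [this]
  exact (hκ (measurableSet_singleton k)).inter (hWc (measurableSet_singleton w))

lemma int_decomp (hκ : Measurable κ) (hWc : Measurable Wc)
    (c : Fin K → S → ℝ) (Z : Ω → ℝ) (hZ : Integrable Z μ) :
    ∫ ω, c (κ ω) (Wc ω) * Z ω ∂μ
      = ∑ k : Fin K, ∑ w : S, c k w * ∫ ω in {ω | κ ω = k ∧ Wc ω = w}, Z ω ∂μ := by
  classical
  have key : ∀ ω, c (κ ω) (Wc ω) * Z ω
      = ∑ k : Fin K, ∑ w : S,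
          Set.indicator {ω | κ ω = k ∧ Wc ω = w} (fun ω => c k w * Z ω) ω := by
    intro ω
    simp [Set.indicator_apply, Set.mem_setOf_eq, ite_and, Finset.sum_ite_eq]
  rw [show (fun ω => c (κ ω) (Wc ω) * Z ω) = fun ω => ∑ k : Fin K, ∑ w : S,
      Set.indicator {ω | κ ω = k ∧ Wc ω = w} (fun ω => c k w * Z ω) ω from funext key]
  rw [integral_finset_sum _ (fun k _ => integrable_finset_sum _ (fun w _ =>
    ((hZ.const_mul _).indicator (meas_cell hκ hWc k w))))]
  refine Finset.sum_congr rfl fun k _ => ?_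
  rw [integral_finset_sum _ (fun w _ => ((hZ.const_mul _).indicator (meas_cell hκ hWc k w)))]
  refine Finset.sum_congr rfl fun w _ => ?_
  rw [integral_indicator (meas_cell hκ hWc k w), integral_const_mul]

lemma setInt_eq (A : Set Ω) (h0 : μ A ≠ 0) (Z : Ω → ℝ) :
    ∫ ω in A, Z ω ∂μ = (μ A).toReal * ∫ ω, Z ω ∂(μ[|A]) := by
  rw [ProbabilityTheory.cond, integral_smul_measure, ENNReal.toReal_inv, smul_eq_mul,
    ← mul_assoc, mul_inv_cancel₀, one_mul]
  exact ENNReal.toReal_ne_zero.mpr ⟨h0, measure_ne_top μ A⟩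

lemma int_W (hWc : Measurable Wc) (g : S → ℝ) :
    ∫ ω, g (Wc ω) ∂μ = ∑ w : S, g w * (μ {ω | Wc ω = w}).toReal := by
  classical
  have key : ∀ ω, g (Wc ω)
      = ∑ w : S, Set.indicator {ω | Wc ω = w} (fun _ => g w) ω := by
    intro ω
    have h : ∀ w, Set.indicator {ω | Wc ω = w} (fun _ => g w) ω
        = if w = Wc ω then g w else 0 := by
      intro w; by_cases h2 : Wc ω = w <;> simp [Set.indicator_apply, h2, eq_comm]
    simp [h, Finset.sum_ite_eq]
  have hmw : ∀ w : S, MeasurableSet {ω | Wc ω = w} := fun w =>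
    hWc (measurableSet_singleton w)
  rw [show (fun ω => g (Wc ω)) = fun ω => ∑ w : S,
      Set.indicator {ω | Wc ω = w} (fun _ => g w) ω from funext key]
  rw [integral_finset_sum _ (fun w _ => (integrable_const _).indicator (hmw w))]
  refine Finset.sum_congr rfl fun w _ => ?_
  rw [integral_indicator (hmw w), setIntegral_const, smul_eq_mul, mul_comm, measureReal_def]

lemma measW_eq (hκ : Measurable κ) (hWc : Measurable Wc) (w : S) :
    (μ {ω | Wc ω = w}).toReal = ∑ k : Fin K, (μ {ω | κ ω = k ∧ Wc ω = w}).toReal := by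
  have hu : {ω | Wc ω = w} = ⋃ k : Fin K, {ω | κ ω = k ∧ Wc ω = w} := by
    ext ω; simp [Set.mem_setOf_eq]
  have hd : Pairwise (Function.onFun Disjoint fun k : Fin K => {ω | κ ω = k ∧ Wc ω = w}) := by
    intro i j hij
    simp only [Function.onFun, Set.disjoint_left]
    rintro ω ⟨h1, _⟩ ⟨h2, _⟩
    exact hij (h1 ▸ h2 ▸ rfl)
  rw [hu, measure_iUnion hd (fun k => meas_cell hκ hWc k w), tsum_fintype,
    ENNReal.toReal_sum (fun k _ => measure_ne_top μ _)]

lemma key_lemma (hK : 0 < K) (hκ : Measurable κ) (hWc : Measurable Wc)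
    (hpos : ∀ (k : Fin K) (w : S), 0 < μ {ω | κ ω = k ∧ Wc ω = w})
    (p : Fin K → S → ℝ)
    (hp : ∀ k w, p k w = (μ {ω | κ ω = k ∧ Wc ω = w}).toReal / (μ {ω | Wc ω = w}).toReal)
    (ℓ : Fin K → S → ℝ) (ℓdd : Ω → ℝ)
    (hℓdd : ∀ ω, ℓdd ω = ℓ (κ ω) (Wc ω) - ∑ j, p j (Wc ω) * ℓ j (Wc ω))
    (Z : Ω → ℝ) (hZ : Integrable Z μ) (z : Fin K → S → ℝ)
    (hz : ∀ k w, z k w = ∫ ω, Z ω ∂(μ[|{ω | κ ω = k ∧ Wc ω = w}])) :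
    ∫ ω, ℓdd ω * Z ω ∂μ
      = ∑ j : Fin K, ∑ k : Fin K, if j < k then
          ∑ w : S, p j w * p k w * (ℓ k w - ℓ j w) * (z k w - z j w)
            * (μ {ω | Wc ω = w}).toReal else 0 := by
  classical
  have : Nonempty (Fin K) := ⟨⟨0, hK⟩⟩
  set c : Fin K → S → ℝ := fun k w => ℓ k w - ∑ j, p j w * ℓ j w with hc
  have ha_pos : ∀ (k : Fin K) (w : S), 0 < (μ {ω | κ ω = k ∧ Wc ω = w}).toReal :=
    fun k w => ENNReal.toReal_pos (hpos k w).ne' (measure_ne_top μ _)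
  have hsw : ∀ w : S, (μ {ω | Wc ω = w}).toReal
      = ∑ k : Fin K, (μ {ω | κ ω = k ∧ Wc ω = w}).toReal := measW_eq μ hκ hWc
  have hs_pos : ∀ w : S, 0 < (μ {ω | Wc ω = w}).toReal := by
    intro w; rw [hsw w]
    exact Finset.sum_pos (fun k _ => ha_pos k w) Finset.univ_nonempty
  have hp1 : ∀ w : S, ∑ k, p k w = 1 := by
    intro w
    simp only [hp, ← Finset.sum_div, ← hsw w]
    exact div_self (hs_pos w).ne'
  have hpa : ∀ (k : Fin K) (w : S), p k w * (μ {ω | Wc ω = w}).toReal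
      = (μ {ω | κ ω = k ∧ Wc ω = w}).toReal := by
    intro k w; rw [hp, div_mul_cancel₀ _ (hs_pos w).ne']
  -- LHS
  have e1 : ∫ ω, ℓdd ω * Z ω ∂μ
      = ∑ k : Fin K, ∑ w : S,
          c k w * ((μ {ω | κ ω = k ∧ Wc ω = w}).toReal * z k w) := by
    have e0 : ∫ ω, ℓdd ω * Z ω ∂μ = ∫ ω, c (κ ω) (Wc ω) * Z ω ∂μ := by
      refine integral_congr_ae (Filter.Eventually.of_forall fun ω => ?_)
      simp only [hℓdd, hc]
    rw [e0, int_decomp μ hκ hWc c Z hZ]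
    refine Finset.sum_congr rfl fun k _ => Finset.sum_congr rfl fun w _ => ?_
    rw [setInt_eq μ _ (hpos k w).ne' Z, ← hz k w]
  rw [e1]
  -- RHS: push ite into sum, swap sums
  have e2 : ∀ (j k : Fin K), (if j < k then
      ∑ w : S, p j w * p k w * (ℓ k w - ℓ j w) * (z k w - z j w)
        * (μ {ω | Wc ω = w}).toReal else 0)
      = ∑ w : S, (if j < k then p j w * p k w * (ℓ k w - ℓ j w) * (z k w - z j w)
        * (μ {ω | Wc ω = w}).toReal else 0) := by
    intro j k; split <;> simp
  simp only [e2]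
  have e3 : (∑ j : Fin K, ∑ k : Fin K, ∑ w : S,
        (if j < k then p j w * p k w * (ℓ k w - ℓ j w) * (z k w - z j w)
          * (μ {ω | Wc ω = w}).toReal else 0))
      = ∑ w : S, ∑ j : Fin K, ∑ k : Fin K,
        (if j < k then p j w * p k w * (ℓ k w - ℓ j w) * (z k w - z j w)
          * (μ {ω | Wc ω = w}).toReal else 0) := by
    rw [show (∑ j : Fin K, ∑ k : Fin K, ∑ w : S,
        (if j < k then p j w * p k w * (ℓ k w - ℓ j w) * (z k w - z j w)
          * (μ {ω | Wc ω = w}).toReal else 0))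
      = ∑ j : Fin K, ∑ w : S, ∑ k : Fin K,
        (if j < k then p j w * p k w * (ℓ k w - ℓ j w) * (z k w - z j w)
          * (μ {ω | Wc ω = w}).toReal else 0) from
      Finset.sum_congr rfl fun j _ => Finset.sum_comm]
    exact Finset.sum_comm
  rw [e3, Finset.sum_comm]
  refine Finset.sum_congr rfl fun w _ => ?_
  rw [half_sum (fun j k => p j w * p k w * (ℓ k w - ℓ j w) * (z k w - z j w)
      * (μ {ω | Wc ω = w}).toReal) (fun j k => by ring) (fun j => by ring)]
  simp only [← Finset.sum_mul]
  rw [cov_id (fun k => p k w) (fun k => ℓ k w) (fun k => z k w) (hp1 w)]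
  have e4 : ∀ k : Fin K, c k w * ((μ {ω | κ ω = k ∧ Wc ω = w}).toReal * z k w)
      = p k w * (ℓ k w - ∑ j, p j w * ℓ j w) * z k w * (μ {ω | Wc ω = w}).toReal := by
    intro k; rw [← hpa k w]; simp only [hc]; ring
  rw [Finset.sum_congr rfl (fun k _ => e4 k), ← Finset.sum_mul]
  ring

end Aux

/-- If all examiner leniencies differ within each covariate cell and the
denominator `E[ℓ̈·X]` is nonzero, the leniency IV estimand `β* = E[ℓ̈·Y]/E[ℓ̈·X]` equals the
`ω(j,k,w)`-weighted average of the pairwise IV estimands `β(j,k,w)`. -/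
theorem stmt12
    {Ω : Type*} [MeasurableSpace Ω] (μ : Measure Ω) [IsProbabilityMeasure μ]
    (K : ℕ) (hK : 2 ≤ K)
    (S : Type*) [Fintype S] [MeasurableSpace S] [MeasurableSingletonClass S]
    (κ : Ω → Fin K) (Wc : Ω → S) (hκ : Measurable κ) (hWc : Measurable Wc)
    (hpos : ∀ (k : Fin K) (w : S), 0 < μ {ω | κ ω = k ∧ Wc ω = w})
    (X Y : Ω → ℝ) (hX : Integrable X μ) (hY : Integrable Y μ)
    (p : Fin K → S → ℝ)
    (hp : ∀ k w, p k w = (μ {ω | κ ω = k ∧ Wc ω = w}).toReal / (μ {ω | Wc ω = w}).toReal)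
    (ℓ m : Fin K → S → ℝ)
    (hℓ : ∀ k w, ℓ k w = ∫ ω, X ω ∂(μ[|{ω | κ ω = k ∧ Wc ω = w}]))
    (hm : ∀ k w, m k w = ∫ ω, Y ω ∂(μ[|{ω | κ ω = k ∧ Wc ω = w}]))
    (ℓdd : Ω → ℝ)
    (hℓdd : ∀ ω, ℓdd ω = ℓ (κ ω) (Wc ω) - ∑ j, p j (Wc ω) * ℓ j (Wc ω))
    (hdist : ∀ (j k : Fin K) (w : S), j ≠ k → ℓ k w ≠ ℓ j w)
    (βp ωp : Fin K → Fin K → S → ℝ)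
    (hβp : ∀ j k w, βp j k w = (m k w - m j w) / (ℓ k w - ℓ j w))
    (hωp : ∀ j k w, ωp j k w = p j w * p k w * (ℓ k w - ℓ j w) ^ 2)
    (hden : ∫ ω, ℓdd ω * X ω ∂μ ≠ 0) :
    (∫ ω, ℓdd ω * Y ω ∂μ) / (∫ ω, ℓdd ω * X ω ∂μ)
      = (∑ j : Fin K, ∑ k : Fin K, if j < k then
            ∫ ω, ωp j k (Wc ω) * βp j k (Wc ω) ∂μ else 0)
        / (∑ j : Fin K, ∑ k : Fin K, if j < k then ∫ ω, ωp j k (Wc ω) ∂μ else 0) := by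
  have hK0 : 0 < K := lt_of_lt_of_le (by norm_num) hK
  have hnum : (∑ j : Fin K, ∑ k : Fin K, if j < k then
      ∫ ω, ωp j k (Wc ω) * βp j k (Wc ω) ∂μ else 0) = ∫ ω, ℓdd ω * Y ω ∂μ := by
    rw [key_lemma μ hK0 hκ hWc hpos p hp ℓ ℓdd hℓdd Y hY m hm]
    refine Finset.sum_congr rfl fun j _ => Finset.sum_congr rfl fun k _ => ?_
    by_cases hjk : j < k
    · simp only [if_pos hjk]
      rw [int_W μ hWc (fun w => ωp j k w * βp j k w)]
      refine Finset.sum_congr rfl fun w _ => ?_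
      have hne : ℓ k w - ℓ j w ≠ 0 := sub_ne_zero.mpr (hdist j k w hjk.ne)
      rw [hωp, hβp]
      field_simp
    · simp [hjk]
  have hden2 : (∑ j : Fin K, ∑ k : Fin K, if j < k then
      ∫ ω, ωp j k (Wc ω) ∂μ else 0) = ∫ ω, ℓdd ω * X ω ∂μ := by
    rw [key_lemma μ hK0 hκ hWc hpos p hp ℓ ℓdd hℓdd X hX ℓ hℓ]
    refine Finset.sum_congr rfl fun j _ => Finset.sum_congr rfl fun k _ => ?_
    by_cases hjk : j < k
    · simp only [if_pos hjk]
      rw [int_W μ hWc (fun w => ωp j k w)]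
      refine Finset.sum_congr rfl fun w _ => ?_
      rw [hωp]
      ring
    · simp [hjk]
  rw [hnum, hden2]
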